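/- arXiv:1401.5446 — 3 statements merged into one kernel-verified Lean document; each statement's English description precedes it below -/
import Mathlib

section
/- For every real c > 0 and all complex numbers μ and λ with Re μ < 0 < Re λ, one has (1/(2π)) ∫_{−∞}^{∞} e^{icy} / ((μ − iy)(iy − λ)) dy = e^{μc}/(λ − μ); equivalently, the integral of e^{ζc} dζ/(2πi (μ − ζ)(ζ − λ)) along the upward-oriented imaginary axis equals e^{μc}/(λ − μ). -/
open MeasureTheory Complex Real Set Filter FourierTransform

open MeasureTheory Complex Real Set Filter FourierTransform

lemma integrableOn_cexp_Ioi (a : ℂ) (ha : a.re < 0) :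
    IntegrableOn (fun t : ℝ => Complex.exp (a * t)) (Ioi (0:ℝ)) := by
  apply (exp_neg_integrableOn_Ioi 0 (b := -a.re) (by linarith)).mono'
  · exact (Complex.continuous_exp.comp
      (continuous_const.mul Complex.continuous_ofReal)).aestronglyMeasurable.restrict
  · filter_upwards with t
    simp [Complex.norm_exp, neg_mul, le_refl]

lemma integral_cexp_Ioi (a : ℂ) (ha : a.re < 0) :
    ∫ t in Ioi (0:ℝ), Complex.exp (a * t) = -a⁻¹ := by
  have ha0 : a ≠ 0 := fun h => by simp [h] at ha
  have hderiv : ∀ x ∈ Ici (0:ℝ), HasDerivAt (fun t : ℝ => Complex.exp (a * t) / a)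
      (Complex.exp (a * x)) x := by
    intro x _
    have h1 : HasDerivAt (fun t : ℝ => a * (t : ℂ)) a x := by
      simpa using ((hasDerivAt_id (x:ℂ)).const_mul a).comp_ofReal
    simpa [mul_div_assoc, div_self ha0] using (h1.cexp).div_const a
  have htend : Tendsto (fun t : ℝ => Complex.exp (a * t) / a) atTop (nhds 0) := by
    rw [tendsto_zero_iff_norm_tendsto_zero]
    have : Tendsto (fun t : ℝ => Real.exp (a.re * t) / ‖a‖) atTop
        (nhds (0 / ‖a‖)) := by
      apply Tendsto.div_const
      apply Real.tendsto_exp_atBot.comp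
      exact Tendsto.const_mul_atTop_of_neg ha tendsto_id
    simpa [Complex.norm_exp, norm_div] using this
  have := integral_Ioi_of_hasDerivAt_of_tendsto' hderiv (integrableOn_cexp_Ioi a ha) htend
  rw [this]
  norm_num

lemma integrableOn_cexp_Iic (a : ℂ) (ha : 0 < a.re) :
    IntegrableOn (fun t : ℝ => Complex.exp (a * t)) (Iic (0:ℝ)) := by
  rw [← Measure.map_neg_eq_self (volume : Measure ℝ)]
  have m : MeasurableEmbedding fun x : ℝ => -x := (Homeomorph.neg ℝ).measurableEmbedding
  rw [m.integrableOn_map_iff]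
  simp_rw [Function.comp_def, neg_preimage, neg_Iic, neg_zero]
  apply Iff.mpr integrableOn_Ici_iff_integrableOn_Ioi
  apply (integrableOn_cexp_Ioi (-a) (by simpa using ha)).congr_fun
    (fun x _ => by push_cast; ring_nf) measurableSet_Ioi

lemma integral_cexp_Iic (a : ℂ) (ha : 0 < a.re) :
    ∫ t in Iic (0:ℝ), Complex.exp (a * t) = a⁻¹ := by
  rw [show Iic (0:ℝ) = Iic (-0) by norm_num, ← integral_comp_neg_Ioi]
  have h1 : ∀ x : ℝ, Complex.exp (a * ↑(-x)) = Complex.exp ((-a) * x) := by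
    intro x; push_cast; ring_nf
  rw [show (fun x : ℝ => Complex.exp (a * ↑(-x))) = fun x : ℝ => Complex.exp ((-a) * x)
    from funext h1]
  rw [integral_cexp_Ioi (-a) (by simpa using ha), inv_neg, neg_neg]

/-- For `c > 0` and `Re μ < 0 < Re λ`, the integral of `e^{ζc} dζ/(2πi (μ − ζ)(ζ − λ))`
along the upward-oriented imaginary axis equals `e^{μc}/(λ − μ)`. -/
theorem imaginary_axis_exp_residue (c : ℝ) (hc : 0 < c) (mu lam : ℂ)
    (hmu : mu.re < 0) (hlam : 0 < lam.re) :
    (1 / (2 * (Real.pi : ℂ))) *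
        ∫ y : ℝ, Complex.exp (Complex.I * c * y) /
          ((mu - Complex.I * y) * (Complex.I * y - lam)) =
      Complex.exp (mu * c) / (lam - mu) := by
  set G : ℝ → ℂ := fun y => ((mu - I * y) * (I * y - lam))⁻¹ with hGdef
  have hd1 : ∀ y : ℝ, mu - I * y ≠ 0 := by
    intro y h
    have : (mu - I * y).re = 0 := by rw [h]; simp
    simp [Complex.sub_re, Complex.mul_re] at this
    linarith
  have hd2 : ∀ y : ℝ, I * y - lam ≠ 0 := by
    intro y h
    have : (I * y - lam).re = 0 := by rw [h]; simp
    simp [Complex.sub_re, Complex.mul_re] at this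
    linarith
  have hGcont : Continuous G := by
    apply Continuous.inv₀
    · exact ((continuous_const.sub (continuous_const.mul Complex.continuous_ofReal)).mul
        ((continuous_const.mul Complex.continuous_ofReal).sub continuous_const))
    · exact fun y => mul_ne_zero (hd1 y) (hd2 y)
  -- norm bound
  have hbound : ∀ y : ℝ, 2 * ‖mu‖ + 2 * ‖lam‖ + 2 ≤ |y| →
      ‖G y‖ ≤ 8 * ‖(1 + y ^ 2)⁻¹‖ := by
    intro y hy
    have ha0 : (0:ℝ) ≤ ‖mu‖ := norm_nonneg _
    have hb0 : (0:ℝ) ≤ ‖lam‖ := norm_nonneg _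
    have hIy : ‖I * (y:ℂ)‖ = |y| := by
      rw [norm_mul, Complex.norm_I, one_mul, Complex.norm_real, Real.norm_eq_abs]
    have e1 : |y| - ‖mu‖ ≤ ‖mu - I * y‖ := by
      rw [norm_sub_rev]
      calc |y| - ‖mu‖ = ‖I * (y:ℂ)‖ - ‖mu‖ := by rw [hIy]
        _ ≤ ‖I * y - mu‖ := norm_sub_norm_le _ _
    have e2 : |y| - ‖lam‖ ≤ ‖I * y - lam‖ := by
      calc |y| - ‖lam‖ = ‖I * (y:ℂ)‖ - ‖lam‖ := by rw [hIy]
        _ ≤ ‖I * y - lam‖ := norm_sub_norm_le _ _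
    have hyy : |y| ^ 2 = y ^ 2 := sq_abs y
    have hprod : (1 + y ^ 2) / 8 ≤ ‖mu - I * y‖ * ‖I * y - lam‖ := by
      calc (1 + y ^ 2) / 8 ≤ (|y| - ‖mu‖) * (|y| - ‖lam‖) := by nlinarith
        _ ≤ ‖mu - I * y‖ * ‖I * y - lam‖ := by
            apply mul_le_mul e1 e2 (by linarith) (norm_nonneg _)
    have hpos : (0:ℝ) < (1 + y ^ 2) / 8 := by positivity
    have : ‖G y‖ = (‖mu - I * y‖ * ‖I * y - lam‖)⁻¹ := by
      rw [hGdef]; simp [norm_inv, norm_mul]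
    rw [this]
    have h8 : (0:ℝ) < 1 + y ^ 2 := by positivity
    rw [norm_inv, Real.norm_eq_abs, abs_of_pos h8]
    calc (‖mu - I * y‖ * ‖I * y - lam‖)⁻¹ ≤ ((1 + y ^ 2) / 8)⁻¹ :=
          inv_anti₀ hpos hprod
      _ = 8 * (1 + y ^ 2)⁻¹ := by field_simp
  have hM : (0:ℝ) < 2 * ‖mu‖ + 2 * ‖lam‖ + 2 := by positivity
  have hGint : Integrable G := by
    apply hGcont.locallyIntegrable.integrable_of_isBigO_atBot_atTop
      (g := fun y : ℝ => (1 + y ^ 2)⁻¹) (g' := fun y : ℝ => (1 + y ^ 2)⁻¹)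
    · rw [Asymptotics.isBigO_iff]
      refine ⟨8, ?_⟩
      filter_upwards [eventually_le_atBot (-(2 * ‖mu‖ + 2 * ‖lam‖ + 2))] with y hy
      exact hbound y (by rw [abs_of_neg (by linarith)]; linarith)
    · exact ⟨univ, univ_mem, integrable_inv_one_add_sq.integrableOn⟩
    · rw [Asymptotics.isBigO_iff]
      refine ⟨8, ?_⟩
      filter_upwards [eventually_ge_atTop (2 * ‖mu‖ + 2 * ‖lam‖ + 2)] with y hy
      exact hbound y (by rw [abs_of_pos (by linarith)]; exact hy)
    · exact ⟨univ, univ_mem, integrable_inv_one_add_sq.integrableOn⟩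
  -- the function h
  set h : ℝ → ℂ := fun t => if 0 ≤ t then Complex.exp (mu * t) else Complex.exp (lam * t)
    with hhdef
  have hh_cont : Continuous h := by
    apply Continuous.if_le
    · exact Complex.continuous_exp.comp (continuous_const.mul Complex.continuous_ofReal)
    · exact Complex.continuous_exp.comp (continuous_const.mul Complex.continuous_ofReal)
    · exact continuous_const
    · exact continuous_id
    · intro x hx; simp [← hx]
  have hmu_int := integrableOn_cexp_Ioi mu hmu
  have hlam_int := integrableOn_cexp_Iic lam hlam
  have hh_Iic : IntegrableOn h (Iic (0:ℝ)) := by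
    apply hlam_int.congr_fun ?_ measurableSet_Iic
    intro x hx
    rcases lt_or_eq_of_le (mem_Iic.mp hx) with h' | h'
    · simp [hhdef, not_le.mpr h']
    · simp [hhdef, h']
  have hh_Ioi : IntegrableOn h (Ioi (0:ℝ)) := by
    apply hmu_int.congr_fun ?_ measurableSet_Ioi
    intro x hx
    simp [hhdef, le_of_lt (mem_Ioi.mp hx)]
  have hh_int : Integrable h := by
    rw [← integrableOn_univ, ← Iic_union_Ioi (a := (0:ℝ))]
    exact hh_Iic.union hh_Ioi
  -- Fourier transform of h
  have hF : ∀ ξ : ℝ, 𝓕 h ξ = (lam - mu) * G (2 * π * ξ) := by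
    intro ξ
    rw [Real.fourier_real_eq_integral_exp_smul]
    have hint : Integrable fun v : ℝ => Complex.exp (↑(-2 * π * v * ξ) * I) * h v := by
      apply hh_int.bdd_mul (c := 1)
      · exact (Complex.continuous_exp.comp ((Complex.continuous_ofReal.comp
          (by continuity)).mul continuous_const)).aestronglyMeasurable
      · exact Filter.Eventually.of_forall fun v => by
          rw [Complex.norm_exp]
          simp
    simp_rw [smul_eq_mul]
    rw [← intervalIntegral.integral_Iic_add_Ioi (hint.integrableOn) (hint.integrableOn)]
    have hIic : ∫ v in Iic (0:ℝ), Complex.exp (↑(-2 * π * v * ξ) * I) * h v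
        = (lam - I * ↑(2 * π * ξ))⁻¹ := by
      rw [integral_Iic_eq_integral_Iio,
        show ∫ v in Iio (0:ℝ), Complex.exp (↑(-2 * π * v * ξ) * I) * h v
          = ∫ v in Iio (0:ℝ), Complex.exp ((lam - I * ↑(2 * π * ξ)) * v) from
          setIntegral_congr_fun measurableSet_Iio fun v hv => by
            rw [hhdef]
            simp only [not_le.mpr (mem_Iio.mp hv), if_false]
            rw [← Complex.exp_add]
            congr 1
            push_cast
            ring,
        ← integral_Iic_eq_integral_Iio]
      rw [integral_cexp_Iic _ (by simp [Complex.sub_re, Complex.mul_re]; exact hlam)]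
    have hIoi : ∫ v in Ioi (0:ℝ), Complex.exp (↑(-2 * π * v * ξ) * I) * h v
        = -(mu - I * ↑(2 * π * ξ))⁻¹ := by
      rw [show ∫ v in Ioi (0:ℝ), Complex.exp (↑(-2 * π * v * ξ) * I) * h v
          = ∫ v in Ioi (0:ℝ), Complex.exp ((mu - I * ↑(2 * π * ξ)) * v) from
          setIntegral_congr_fun measurableSet_Ioi fun v hv => by
            rw [hhdef]
            simp only [le_of_lt (mem_Ioi.mp hv), if_true]
            rw [← Complex.exp_add]
            congr 1
            push_cast
            ring]
      rw [integral_cexp_Ioi _ (by simp [Complex.sub_re, Complex.mul_re]; exact hmu)]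
    rw [hIic, hIoi, hGdef]
    have h1 := hd1 (2 * π * ξ)
    have h2 := hd2 (2 * π * ξ)
    have h3 : lam - I * ↑(2 * π * ξ) ≠ 0 := fun h => h2 (by linear_combination -h)
    set z : ℂ := I * ((2 * π * ξ : ℝ) : ℂ) with hz
    rw [← sub_eq_add_neg, inv_sub_inv h3 h1, ← div_eq_mul_inv,
      div_eq_div_iff (mul_ne_zero h3 h1) (mul_ne_zero h1 h2)]
    ring
  -- Integrability of the Fourier transform
  have hFint : Integrable (𝓕 h) := by
    rw [show 𝓕 h = fun ξ : ℝ => (lam - mu) * G (2 * π * ξ) from funext hF]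
    exact (hGint.comp_mul_left' (R := 2 * π) (by positivity)).const_mul _
  -- Fourier inversion
  have hinv := hh_cont.fourierInv_fourier_eq hh_int hFint
  have hkey : 𝓕 (𝓕 h) (-c) = Complex.exp (mu * c) := by
    rw [← fourierInv_eq_fourier_neg]
    rw [hinv, hhdef]
    simp [hc.le]
  rw [Real.fourier_real_eq_integral_exp_smul] at hkey
  have hrw : ∀ ξ : ℝ, Complex.exp (↑(-2 * π * ξ * -c) * I) • 𝓕 h ξ
      = (lam - mu) * (Complex.exp (I * c * ↑(2 * π * ξ)) * G (2 * π * ξ)) := by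
    intro ξ
    rw [smul_eq_mul, hF ξ]
    have : Complex.exp (↑(-2 * π * ξ * -c) * I) = Complex.exp (I * c * ↑(2 * π * ξ)) := by
      congr 1; push_cast; ring
    rw [this]; ring
  simp_rw [hrw] at hkey
  rw [MeasureTheory.integral_const_mul] at hkey
  have hsub : ∫ ξ : ℝ, Complex.exp (I * c * ↑(2 * π * ξ)) * G (2 * π * ξ)
      = |(2 * π)⁻¹| • ∫ y : ℝ, Complex.exp (I * c * y) * G y := by
    exact Measure.integral_comp_mul_left (fun y : ℝ => Complex.exp (I * c * y) * G y) (2 * π)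
  rw [hsub] at hkey
  have habs : |(2 * π)⁻¹| = (2 * π)⁻¹ := abs_of_pos (by positivity)
  rw [habs] at hkey
  have hdiv : (fun y : ℝ => Complex.exp (I * c * y) / ((mu - I * y) * (I * y - lam)))
      = fun y : ℝ => Complex.exp (I * c * y) * G y := by
    funext y; rw [hGdef, div_eq_mul_inv]
  rw [hdiv]
  have hlm : lam - mu ≠ 0 := by
    intro h
    have : (lam - mu).re = 0 := by rw [h]; simp
    simp [Complex.sub_re] at this
    linarith
  have hpi : (π : ℂ) ≠ 0 := by
    simp [Complex.ofReal_ne_zero]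
  rw [Complex.real_smul] at hkey
  push_cast at hkey
  rw [← hkey]
  field_simp
end

section
/- For all complex numbers λ₁ and λ₂ with Re λ₁ > 0, Re λ₂ > 0 and λ₁ ≠ λ₂, and every real c, the integral of e^{ζc} dζ/(2πi (λ₂ − ζ)(ζ − λ₁)) along the upward-oriented imaginary axis, i.e. (1/(2π)) ∫_{−∞}^{∞} e^{icy} / ((λ₂ − iy)(iy − λ₁)) dy, equals (e^{λ₂ c} − e^{λ₁ c})/(λ₂ − λ₁) if c < 0, and equals 0 if c ≥ 0. -/
open MeasureTheory Complex

section AuxiliaryLemmas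

open Set Filter
open scoped Real FourierTransform Topology

private lemma aux_integrableOn_cexp {a : ℂ} (ha : 0 < a.re) :
    IntegrableOn (fun t : ℝ => Complex.exp (-(a * t))) (Ioi (0:ℝ)) := by
  apply Integrable.mono' (exp_neg_integrableOn_Ioi 0 ha)
  · exact (Continuous.aestronglyMeasurable (by fun_prop)).restrict
  · filter_upwards with t
    rw [Complex.norm_exp]
    simp [Complex.mul_re]

private lemma aux_integral_cexp {a : ℂ} (ha : 0 < a.re) :
    ∫ t in Ioi (0:ℝ), Complex.exp (-(a * t)) = 1 / a := by
  have ha0 : a ≠ 0 := fun h => by simp [h] at ha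
  have lim1 : Tendsto (fun T : ℝ => ∫ t in (0:ℝ)..T, Complex.exp (-(a * t))) atTop
      (𝓝 (∫ t in Ioi (0:ℝ), Complex.exp (-(a * t)))) :=
    intervalIntegral_tendsto_integral_Ioi 0 (aux_integrableOn_cexp ha) tendsto_id
  have eq1 : ∀ T : ℝ, (∫ t in (0:ℝ)..T, Complex.exp (-(a * t)))
      = (Complex.exp (-(a * T)) - 1) / (-a) := by
    intro T
    simp_rw [neg_mul_eq_neg_mul (α := ℂ)]
    rw [integral_exp_mul_complex (by simpa using ha0)]
    simp
  have lim2 : Tendsto (fun T : ℝ => Complex.exp (-(a * T))) atTop (𝓝 0) := by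
    rw [tendsto_zero_iff_norm_tendsto_zero]
    have hn : (fun T : ℝ => ‖Complex.exp (-(a * T))‖) = fun T => Real.exp (-a.re * T) := by
      funext T
      rw [Complex.norm_exp]
      simp [Complex.mul_re]
    rw [hn]
    refine Real.tendsto_exp_atBot.comp ?_
    exact Tendsto.const_mul_atTop_of_neg (neg_neg_iff_pos.mpr ha) tendsto_id
  have lim3 : Tendsto (fun T : ℝ => (Complex.exp (-(a * T)) - 1) / (-a)) atTop
      (𝓝 ((0 - 1) / (-a))) := ((lim2.sub tendsto_const_nhds).div_const _)
  have := tendsto_nhds_unique (by simpa only [eq1] using lim1) lim3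
  rw [this]
  simp [div_neg, neg_div]

private lemma aux_fourier_kernel {a : ℂ} (ha : 0 < a.re) (ξ : ℝ) :
    ∫ x in Ioi (0:ℝ), Complex.exp (↑(-2 * Real.pi * x * ξ) * Complex.I) * Complex.exp (-(a * x))
      = 1 / (a + ↑(2 * Real.pi * ξ) * Complex.I) := by
  have hre : 0 < (a + ↑(2 * Real.pi * ξ) * Complex.I).re := by
    simpa [Complex.add_re, Complex.mul_I_re] using ha
  rw [← aux_integral_cexp hre]
  apply setIntegral_congr_fun measurableSet_Ioi
  intro x _
  simp only
  rw [← Complex.exp_add]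
  congr 1
  push_cast
  ring

private noncomputable def hfun (l₁ l₂ : ℂ) (x : ℝ) : ℂ :=
  (Complex.exp (-(l₁ * ↑(max x 0))) - Complex.exp (-(l₂ * ↑(max x 0)))) / (l₂ - l₁)

private lemma hfun_continuous (l₁ l₂ : ℂ) : Continuous (hfun l₁ l₂) := by
  unfold hfun
  fun_prop

private lemma hfun_integrable {l₁ l₂ : ℂ} (h₁ : 0 < l₁.re) (h₂ : 0 < l₂.re) :
    Integrable (hfun l₁ l₂) := by
  rw [← integrableOn_univ, ← Set.Iic_union_Ioi (a := (0:ℝ)), integrableOn_union]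
  constructor
  · have base0 : IntegrableOn (fun _ : ℝ => (0:ℂ)) (Iic 0) := integrableOn_zero
    refine base0.congr_fun ?_ measurableSet_Iic
    intro x hx
    simp [hfun, max_eq_right (mem_Iic.mp hx)]
  · have base : IntegrableOn
        (fun x : ℝ => (Complex.exp (-(l₁ * x)) - Complex.exp (-(l₂ * x))) / (l₂ - l₁))
        (Ioi 0) := ((aux_integrableOn_cexp h₁).sub (aux_integrableOn_cexp h₂)).div_const _
    refine base.congr_fun ?_ measurableSet_Ioi
    intro x hx
    simp [hfun, max_eq_left (le_of_lt (mem_Ioi.mp hx))]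

private lemma hfun_fourier {l₁ l₂ : ℂ} (h₁ : 0 < l₁.re) (h₂ : 0 < l₂.re) (hne : l₁ ≠ l₂) (ξ : ℝ) :
    𝓕 (hfun l₁ l₂) ξ
      = 1 / ((l₁ + ↑(2 * Real.pi * ξ) * Complex.I) * (l₂ + ↑(2 * Real.pi * ξ) * Complex.I)) := by
  have hre1 : 0 < (l₁ + ↑(2 * Real.pi * ξ) * Complex.I).re := by
    simpa [Complex.add_re, Complex.mul_I_re] using h₁
  have hre2 : 0 < (l₂ + ↑(2 * Real.pi * ξ) * Complex.I).re := by
    simpa [Complex.add_re, Complex.mul_I_re] using h₂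
  have hne1 : l₁ + ↑(2 * Real.pi * ξ) * Complex.I ≠ 0 := fun h => by rw [h] at hre1; simp at hre1
  have hne2 : l₂ + ↑(2 * Real.pi * ξ) * Complex.I ≠ 0 := fun h => by rw [h] at hre2; simp at hre2
  have hnel : l₂ - l₁ ≠ 0 := sub_ne_zero.mpr (Ne.symm hne)
  rw [Real.fourier_real_eq_integral_exp_smul]
  have hint : Integrable
      (fun v : ℝ => Complex.exp (↑(-2 * Real.pi * v * ξ) * Complex.I) * hfun l₁ l₂ v) := by
    refine (hfun_integrable h₁ h₂).bdd_mul (Complex.continuous_exp.comp (by fun_prop)).aestronglyMeasurable (c := 1) (Filter.Eventually.of_forall fun v => ?_)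
    rw [Complex.norm_exp]
    simp [Complex.mul_I_re]
  simp only [smul_eq_mul]
  rw [← intervalIntegral.integral_Iic_add_Ioi (b := (0:ℝ)) hint.integrableOn hint.integrableOn]
  have hIic : (∫ x in Iic (0:ℝ),
      Complex.exp (↑(-2 * Real.pi * x * ξ) * Complex.I) * hfun l₁ l₂ x) = 0 := by
    rw [setIntegral_congr_fun measurableSet_Iic (g := fun _ => (0:ℂ))
      (fun x hx => by simp [hfun, max_eq_right (mem_Iic.mp hx)])]
    simp
  rw [hIic, zero_add]
  have hIoi : (∫ x in Ioi (0:ℝ),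
      Complex.exp (↑(-2 * Real.pi * x * ξ) * Complex.I) * hfun l₁ l₂ x)
      = ((∫ x in Ioi (0:ℝ),
            Complex.exp (↑(-2 * Real.pi * x * ξ) * Complex.I) * Complex.exp (-(l₁ * x)))
        - ∫ x in Ioi (0:ℝ),
            Complex.exp (↑(-2 * Real.pi * x * ξ) * Complex.I) * Complex.exp (-(l₂ * x)))
        / (l₂ - l₁) := by
    rw [← integral_sub, ← integral_div]
    · apply setIntegral_congr_fun measurableSet_Ioi
      intro x hx
      simp only [hfun, max_eq_left (le_of_lt (mem_Ioi.mp hx))]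
      ring
    · refine (aux_integrableOn_cexp h₁).bdd_mul (Complex.continuous_exp.comp (by fun_prop)).aestronglyMeasurable (c := 1) (Filter.Eventually.of_forall fun v => ?_)
      rw [Complex.norm_exp]
      simp [Complex.mul_I_re]
    · refine (aux_integrableOn_cexp h₂).bdd_mul (Complex.continuous_exp.comp (by fun_prop)).aestronglyMeasurable (c := 1) (Filter.Eventually.of_forall fun v => ?_)
      rw [Complex.norm_exp]
      simp [Complex.mul_I_re]
  rw [hIoi, aux_fourier_kernel h₁, aux_fourier_kernel h₂]
  have key : l₂ - l₁ = (l₂ + ↑(2 * Real.pi * ξ) * Complex.I) - (l₁ + ↑(2 * Real.pi * ξ) * Complex.I) := by ring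
  rw [div_sub_div _ _ hne1 hne2, one_mul, mul_one, ← key, div_div_cancel_left' hnel, one_div]

private lemma aux_integrable_inv_sq {r : ℝ} (hr : r ≠ 0) :
    Integrable (fun x : ℝ => (r ^ 2 + x ^ 2)⁻¹) := by
  have h : (fun x : ℝ => (r ^ 2 + x ^ 2)⁻¹)
      = fun x : ℝ => (r ^ 2)⁻¹ * (1 + (x / r) ^ 2)⁻¹ := by
    funext x
    rw [← mul_inv]
    congr 1
    field_simp
  rw [h]
  exact (integrable_inv_one_add_sq.comp_div hr).const_mul _

private lemma aux_integrable_inv_sq_affine {r : ℝ} (hr : r ≠ 0) (m : ℝ) :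
    Integrable (fun ξ : ℝ => (r ^ 2 + (m + 2 * Real.pi * ξ) ^ 2)⁻¹) := by
  have h1 : Integrable (fun x : ℝ => (r ^ 2 + (m + x) ^ 2)⁻¹) :=
    (aux_integrable_inv_sq hr).comp_add_left m
  have h2 := h1.comp_mul_left' (R := 2 * Real.pi) (by positivity)
  simpa [mul_assoc] using h2

private lemma hfun_fourier_integrable {l₁ l₂ : ℂ} (h₁ : 0 < l₁.re) (h₂ : 0 < l₂.re)
    (hne : l₁ ≠ l₂) : Integrable (𝓕 (hfun l₁ l₂)) := by
  have key : ∀ A B : ℝ, 0 < A → 0 < B → 1 / (A * B) ≤ ((A ^ 2)⁻¹ + (B ^ 2)⁻¹) / 2 := by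
    intro A B hA hB
    rw [div_le_div_iff₀ (by positivity) two_pos]
    have h3 : 2 * A⁻¹ * B⁻¹ ≤ (A⁻¹) ^ 2 + (B⁻¹) ^ 2 := two_mul_le_add_sq _ _
    have h4 := mul_le_mul_of_nonneg_right h3 (le_of_lt (mul_pos hA hB))
    calc (1:ℝ) * 2 = (2 * A⁻¹ * B⁻¹) * (A * B) := by field_simp
      _ ≤ ((A⁻¹) ^ 2 + (B⁻¹) ^ 2) * (A * B) := h4
      _ = ((A ^ 2)⁻¹ + (B ^ 2)⁻¹) * (A * B) := by rw [inv_pow, inv_pow]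
  have hbound : Integrable (fun ξ : ℝ =>
      ((l₁.re ^ 2 + (l₁.im + 2 * Real.pi * ξ) ^ 2)⁻¹
        + (l₂.re ^ 2 + (l₂.im + 2 * Real.pi * ξ) ^ 2)⁻¹) / 2) :=
    ((aux_integrable_inv_sq_affine (ne_of_gt h₁) l₁.im).add
      (aux_integrable_inv_sq_affine (ne_of_gt h₂) l₂.im)).div_const 2
  have hc : Continuous (𝓕 (hfun l₁ l₂)) :=
    VectorFourier.fourierIntegral_continuous Real.continuous_fourierChar
      (by exact continuous_inner) (hfun_integrable h₁ h₂)
  apply hbound.mono' hc.aestronglyMeasurable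
  filter_upwards with ξ
  rw [hfun_fourier h₁ h₂ hne ξ]
  have hre1 : 0 < (l₁ + ↑(2 * Real.pi * ξ) * Complex.I).re := by
    simpa [Complex.add_re, Complex.mul_I_re] using h₁
  have hre2 : 0 < (l₂ + ↑(2 * Real.pi * ξ) * Complex.I).re := by
    simpa [Complex.add_re, Complex.mul_I_re] using h₂
  have hne1 : l₁ + ↑(2 * Real.pi * ξ) * Complex.I ≠ 0 := fun h => by rw [h] at hre1; simp at hre1
  have hne2 : l₂ + ↑(2 * Real.pi * ξ) * Complex.I ≠ 0 := fun h => by rw [h] at hre2; simp at hre2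
  have hA0 : 0 < ‖l₁ + ↑(2 * Real.pi * ξ) * Complex.I‖ :=
    norm_pos_iff.mpr hne1
  have hB0 : 0 < ‖l₂ + ↑(2 * Real.pi * ξ) * Complex.I‖ :=
    norm_pos_iff.mpr hne2
  have hA : ‖l₁ + ↑(2 * Real.pi * ξ) * Complex.I‖ ^ 2
      = l₁.re ^ 2 + (l₁.im + 2 * Real.pi * ξ) ^ 2 := by
    rw [Complex.sq_norm, Complex.normSq_apply]
    simp only [Complex.add_re, Complex.add_im, Complex.mul_I_re, Complex.mul_I_im,
      Complex.ofReal_re, Complex.ofReal_im]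
    ring
  have hB : ‖l₂ + ↑(2 * Real.pi * ξ) * Complex.I‖ ^ 2
      = l₂.re ^ 2 + (l₂.im + 2 * Real.pi * ξ) ^ 2 := by
    rw [Complex.sq_norm, Complex.normSq_apply]
    simp only [Complex.add_re, Complex.add_im, Complex.mul_I_re, Complex.mul_I_im,
      Complex.ofReal_re, Complex.ofReal_im]
    ring
  rw [norm_div, norm_one, norm_mul]
  calc 1 / (‖l₁ + ↑(2 * Real.pi * ξ) * Complex.I‖
        * ‖l₂ + ↑(2 * Real.pi * ξ) * Complex.I‖)
      ≤ ((‖l₁ + ↑(2 * Real.pi * ξ) * Complex.I‖ ^ 2)⁻¹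
        + (‖l₂ + ↑(2 * Real.pi * ξ) * Complex.I‖ ^ 2)⁻¹) / 2 := key _ _ hA0 hB0
    _ = _ := by rw [hA, hB]

private lemma hfun_inversion {l₁ l₂ : ℂ} (h₁ : 0 < l₁.re) (h₂ : 0 < l₂.re)
    (hne : l₁ ≠ l₂) (x : ℝ) :
    (∫ ξ : ℝ, Complex.exp (↑(2 * Real.pi * (ξ * x)) * Complex.I) *
        (1 / ((l₁ + ↑(2 * Real.pi * ξ) * Complex.I) * (l₂ + ↑(2 * Real.pi * ξ) * Complex.I))))
      = hfun l₁ l₂ x := by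
  have hinv := (hfun_integrable h₁ h₂).fourierInv_fourier_eq (hfun_fourier_integrable h₁ h₂ hne)
    ((hfun_continuous l₁ l₂).continuousAt (x := x))
  rw [← hinv, Real.fourierInv_eq']
  refine integral_congr_ae (Filter.Eventually.of_forall fun ξ => ?_)
  beta_reduce
  rw [hfun_fourier h₁ h₂ hne ξ, smul_eq_mul]
  norm_num [RCLike.inner_apply]
  left; ring_nf


end AuxiliaryLemmas

section Main

open Set Filter
open scoped Real FourierTransform Topology

/-- For `Re λ₁ > 0`, `Re λ₂ > 0`, `λ₁ ≠ λ₂` and `c` real, the integral of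
`e^{ζc} dζ/(2πi (λ₂ − ζ)(ζ − λ₁))` along the upward-oriented imaginary axis equals
`(e^{λ₂c} − e^{λ₁c})/(λ₂ − λ₁)` if `c < 0` and `0` if `c ≥ 0`. -/
theorem imaginary_axis_exp_residue_same_side (lam₁ lam₂ : ℂ)
    (h₁ : 0 < lam₁.re) (h₂ : 0 < lam₂.re) (hne : lam₁ ≠ lam₂) (c : ℝ) :
    (1 / (2 * (Real.pi : ℂ))) *
        ∫ y : ℝ, Complex.exp (Complex.I * c * y) /
          ((lam₂ - Complex.I * y) * (Complex.I * y - lam₁)) =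
      if c < 0 then (Complex.exp (lam₂ * c) - Complex.exp (lam₁ * c)) / (lam₂ - lam₁)
      else 0 := by
  have hnel : lam₂ - lam₁ ≠ 0 := sub_ne_zero.mpr (Ne.symm hne)
  set φ : ℝ → ℂ := fun y => Complex.exp (Complex.I * c * y) /
      ((lam₂ - Complex.I * y) * (Complex.I * y - lam₁)) with hφ
  set ψ : ℝ → ℂ := fun ξ => Complex.exp (↑(2 * Real.pi * (ξ * (-c))) * Complex.I) *
      (1 / ((lam₁ + ↑(2 * Real.pi * ξ) * Complex.I)
        * (lam₂ + ↑(2 * Real.pi * ξ) * Complex.I))) with hψ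
  have hψint : (∫ ξ : ℝ, ψ ξ) = hfun lam₁ lam₂ (-c) := hfun_inversion h₁ h₂ hne (-c)
  have hpt : ∀ ξ : ℝ, φ (2 * Real.pi * ξ) = -ψ (-ξ) := by
    intro ξ
    have hexp : Complex.I * ↑c * ↑(2 * Real.pi * ξ)
        = ↑(2 * Real.pi * (-ξ * (-c))) * Complex.I := by push_cast; ring
    have d1 : lam₂ - Complex.I * ↑(2 * Real.pi * ξ) ≠ 0 := by
      intro h
      have h' := congrArg Complex.re h
      simp [Complex.sub_re, Complex.mul_re] at h'
      linarith
    have d2 : Complex.I * ↑(2 * Real.pi * ξ) - lam₁ ≠ 0 := by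
      intro h
      have h' := congrArg Complex.re h
      simp [Complex.sub_re, Complex.mul_re] at h'
      linarith
    have hre1 : 0 < (lam₁ + ↑(2 * Real.pi * (-ξ)) * Complex.I).re := by
      simpa [Complex.add_re, Complex.mul_I_re] using h₁
    have hre2 : 0 < (lam₂ + ↑(2 * Real.pi * (-ξ)) * Complex.I).re := by
      simpa [Complex.add_re, Complex.mul_I_re] using h₂
    have d3 : lam₁ + ↑(2 * Real.pi * (-ξ)) * Complex.I ≠ 0 := fun h => by
      rw [h] at hre1; simp at hre1
    have d4 : lam₂ + ↑(2 * Real.pi * (-ξ)) * Complex.I ≠ 0 := fun h => by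
      rw [h] at hre2; simp at hre2
    simp only [hφ, hψ]
    rw [hexp]
    rw [show (lam₁ + ↑(2 * Real.pi * (-ξ)) * Complex.I) * (lam₂ + ↑(2 * Real.pi * (-ξ)) * Complex.I)
        = -((lam₂ - Complex.I * ↑(2 * Real.pi * ξ)) * (Complex.I * ↑(2 * Real.pi * ξ) - lam₁)) by
      push_cast; ring]
    rw [mul_one_div, div_neg, neg_neg]
  have step1 : (∫ ξ : ℝ, φ (2 * Real.pi * ξ)) = |(2 * Real.pi)⁻¹| • ∫ y : ℝ, φ y :=
    MeasureTheory.Measure.integral_comp_mul_left φ (2 * Real.pi)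
  have step2 : (∫ ξ : ℝ, φ (2 * Real.pi * ξ)) = -∫ ξ : ℝ, ψ ξ := by
    rw [show (fun ξ : ℝ => φ (2 * Real.pi * ξ)) = fun ξ : ℝ => -ψ (-ξ) from funext hpt,
      integral_neg, integral_neg_eq_self]
  have habs : |(2 * Real.pi)⁻¹| = (2 * Real.pi)⁻¹ := abs_of_pos (by positivity)
  have h2pi : (2 * Real.pi : ℝ) ≠ 0 := by positivity
  have main : (∫ y : ℝ, φ y) = (2 * Real.pi : ℝ) • (-(hfun lam₁ lam₂ (-c))) := by
    have hh : (2 * Real.pi : ℝ) • ((2 * Real.pi)⁻¹ • (∫ y : ℝ, φ y))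
        = (2 * Real.pi : ℝ) • (-(hfun lam₁ lam₂ (-c))) := by
      rw [← habs, ← step1, step2, hψint]
    rwa [smul_smul, mul_inv_cancel₀ h2pi, one_smul] at hh
  have h2piC : (2 * (Real.pi : ℂ)) ≠ 0 := by
    simp [Real.pi_ne_zero]
  rw [main, Complex.real_smul]
  rw [show (1 / (2 * (Real.pi : ℂ))) * (((2 * Real.pi : ℝ) : ℂ) * -(hfun lam₁ lam₂ (-c)))
      = -(hfun lam₁ lam₂ (-c)) by
    push_cast
    rw [one_div, ← mul_assoc, inv_mul_cancel₀ h2piC, one_mul]]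
  unfold hfun
  split_ifs with hc
  · rw [max_eq_left (by linarith : (0:ℝ) ≤ -c)]
    rw [show -(lam₁ * ((-c : ℝ) : ℂ)) = lam₁ * c by push_cast; ring,
      show -(lam₂ * ((-c : ℝ) : ℂ)) = lam₂ * c by push_cast; ring]
    rw [← neg_div, neg_sub]
  · rw [max_eq_right (by linarith : -c ≤ (0:ℝ))]
    simp

end Main
end

section
/- There is a constant C > 0 such that for every p ≥ 1 and every σ ≥ 0, with Θ_{σ̃}(λ) := λ³/3 − 2^{2/3} σ λ and λ(u) := 2^{1/3}√σ + e^{iπ/3} u, one has ∫_0^∞ |exp( Θ_{σ̃}(λ(u)) )|^p du ≤ C e^{−(4/3) p σ^{3/2}}, and moreover sup_{u ≥ 0} |exp( Θ_{σ̃}(λ(u)) )| = e^{−(4/3) σ^{3/2}}. In particular the jump of the tacnode Riemann–Hilbert problem on the contour R₁ is exponentially suppressed in every L^p norm, 1 ≤ p ≤ ∞, as σ → +∞. -/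
open MeasureTheory Set Complex

/-- The phase `Θ_{σ̃}(λ) := λ³/3 − 2^{2/3}σλ` (with `σ̃ = 2^{2/3}σ`). -/
noncomputable def ThetaSigma (σ : ℝ) (l : ℂ) : ℂ :=
  l ^ 3 / 3 - ((2 : ℝ) ^ ((2 : ℝ) / 3) * σ : ℝ) * l

/-- The parametrization `λ(u) = 2^{1/3}√σ + e^{iπ/3}u` of one branch of the contour `R₁`
through the critical point `2^{1/3}√σ` of `Θ_{σ̃}`. -/
noncomputable def lamR1 (σ u : ℝ) : ℂ :=
  ((2 : ℝ) ^ ((1 : ℝ) / 3) * Real.sqrt σ : ℝ) + Complex.exp (Real.pi / 3 * Complex.I) * u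

lemma hexp_pi3 : Complex.exp (Real.pi / 3 * Complex.I) =
    ((1/2 : ℝ) : ℂ) + ((Real.sqrt 3 / 2 : ℝ) : ℂ) * Complex.I := by
  have h : (Real.pi / 3 : ℂ) * Complex.I = ((Real.pi / 3 : ℝ) : ℂ) * Complex.I := by push_cast; ring
  rw [h, Complex.exp_mul_I, ← Complex.ofReal_cos, ← Complex.ofReal_sin,
    Real.cos_pi_div_three, Real.sin_pi_div_three]

lemma theta_aux (a u : ℝ) :
    ((a : ℂ) + Complex.exp (Real.pi / 3 * Complex.I) * u) ^ 3 / 3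
      - ((a ^ 2 : ℝ) : ℂ) * ((a : ℂ) + Complex.exp (Real.pi / 3 * Complex.I) * u)
    = ((-(2/3) * a ^ 3 - a * u ^ 2 / 2 - u ^ 3 / 3 : ℝ) : ℂ)
      + ((Real.sqrt 3 / 2 * a * u ^ 2 : ℝ) : ℂ) * Complex.I := by
  have ht : ((Real.sqrt 3 : ℝ) : ℂ) ^ 2 = 3 := by
    norm_cast
    rw [Real.sq_sqrt]; norm_num
  rw [hexp_pi3]
  set t : ℂ := ((Real.sqrt 3 : ℝ) : ℂ)
  push_cast
  set A : ℂ := (a : ℂ)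
  set U : ℂ := (u : ℂ)
  linear_combination (-(A*U^2)/4 - U^3/8 - t*Complex.I*U^3/24) * ht +
    (A*U^2*t^2/4 + U^3*t^2/8 + U^3*t^3*Complex.I/24) * Complex.I_sq

/-- norm formula -/
lemma norm_exp_theta (σ : ℝ) (hσ : 0 ≤ σ) (u : ℝ) :
    ‖Complex.exp (ThetaSigma σ (lamR1 σ u))‖ =
      Real.exp (-(4/3) * σ ^ ((3:ℝ)/2)
        - (2:ℝ) ^ ((1:ℝ)/3) * Real.sqrt σ * u ^ 2 / 2 - u ^ 3 / 3) := by
  set a : ℝ := (2:ℝ) ^ ((1:ℝ)/3) * Real.sqrt σ with ha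
  have ha2 : (2:ℝ) ^ ((2:ℝ)/3) * σ = a ^ 2 := by
    rw [ha, mul_pow, Real.sq_sqrt hσ, ← Real.rpow_natCast ((2:ℝ) ^ ((1:ℝ)/3)) 2,
      ← Real.rpow_mul (by norm_num : (0:ℝ) ≤ 2)]
    norm_num
  have ha3 : a ^ 3 = 2 * σ ^ ((3:ℝ)/2) := by
    rw [ha, mul_pow, ← Real.rpow_natCast ((2:ℝ) ^ ((1:ℝ)/3)) 3,
      ← Real.rpow_mul (by norm_num : (0:ℝ) ≤ 2), Real.sqrt_eq_rpow,
      ← Real.rpow_natCast (σ ^ ((1:ℝ)/2)) 3, ← Real.rpow_mul hσ]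
    norm_num
  have key : ThetaSigma σ (lamR1 σ u)
      = ((-(2/3) * a ^ 3 - a * u ^ 2 / 2 - u ^ 3 / 3 : ℝ) : ℂ)
        + ((Real.sqrt 3 / 2 * a * u ^ 2 : ℝ) : ℂ) * Complex.I := by
    rw [ThetaSigma, lamR1, ← ha, ha2, theta_aux]
  rw [key, Complex.norm_exp]
  congr 1
  simp only [Complex.add_re, Complex.mul_re, Complex.ofReal_re, Complex.ofReal_im,
    Complex.I_re, Complex.I_im, mul_zero, mul_one, zero_mul, sub_zero]
  rw [ha3]; ring

/-- The jump of the tacnode Riemann–Hilbert problem on the contour `R₁` is exponentially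
suppressed in every `L^p` norm, `1 ≤ p ≤ ∞`, as `σ → +∞`: there is `C > 0` with
`∫₀^∞ |e^{Θ_{σ̃}(λ(u))}|^p du ≤ C e^{−(4/3)pσ^{3/2}}` for all `p ≥ 1`, `σ ≥ 0`, and
`sup_{u ≥ 0} |e^{Θ_{σ̃}(λ(u))}| = e^{−(4/3)σ^{3/2}}`. -/
theorem jump_R1_exponentially_suppressed :
    ∃ C > (0 : ℝ), ∀ p : ℝ, 1 ≤ p → ∀ σ : ℝ, 0 ≤ σ →
      (∫ u in Ioi (0 : ℝ), ‖Complex.exp (ThetaSigma σ (lamR1 σ u))‖ ^ p) ≤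
          C * Real.exp (-(4 / 3) * p * σ ^ ((3 : ℝ) / 2)) ∧
        IsGreatest ((fun u : ℝ => ‖Complex.exp (ThetaSigma σ (lamR1 σ u))‖) '' Ici 0)
          (Real.exp (-(4 / 3) * σ ^ ((3 : ℝ) / 2))) := by
  refine ⟨3 * Real.exp (1/3), by positivity, fun p hp σ hσ => ?_⟩
  set a : ℝ := (2:ℝ) ^ ((1:ℝ)/3) * Real.sqrt σ with ha
  have ha0 : 0 ≤ a := by positivity
  set K : ℝ := (4/3) * σ ^ ((3:ℝ)/2) with hK
  have hK0 : 0 ≤ K := by positivity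
  have hnorm : ∀ u : ℝ, ‖Complex.exp (ThetaSigma σ (lamR1 σ u))‖
      = Real.exp (-K - a * u ^ 2 / 2 - u ^ 3 / 3) := by
    intro u; rw [norm_exp_theta σ hσ u]; congr 1; rw [hK]; ring
  constructor
  · -- integral bound
    have hfun : ∀ u : ℝ, ‖Complex.exp (ThetaSigma σ (lamR1 σ u))‖ ^ p
        = Real.exp ((-K - a * u ^ 2 / 2 - u ^ 3 / 3) * p) := by
      intro u; rw [hnorm u, Real.exp_mul]
    have hbound : ∀ u : ℝ, 0 ≤ u →
        Real.exp ((-K - a * u ^ 2 / 2 - u ^ 3 / 3) * p)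
          ≤ Real.exp (-K * p) * (Real.exp (1/3) * Real.exp (-(1/3) * u)) := by
      intro u hu
      rw [← Real.exp_add, ← Real.exp_add]
      apply Real.exp_le_exp.mpr
      have hg : a * u ^ 2 / 2 + u ^ 3 / 3 ≥ u/3 - 1/3 := by
        nlinarith [mul_nonneg ha0 (sq_nonneg u), sq_nonneg (u - 1), sq_nonneg (u + 1)]
      have hg0 : 0 ≤ a * u ^ 2 / 2 + u ^ 3 / 3 := by
        have := pow_nonneg hu 3
        nlinarith [mul_nonneg ha0 (sq_nonneg u)]
      nlinarith [mul_le_mul_of_nonneg_right hp hg0]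
    have hMint : IntegrableOn
        (fun u : ℝ => Real.exp (-K * p) * (Real.exp (1/3) * Real.exp (-(1/3) * u)))
        (Ioi (0:ℝ)) := by
      exact ((exp_neg_integrableOn_Ioi 0 (by norm_num : (0:ℝ) < 1/3)).const_mul
        (Real.exp (1/3))).const_mul (Real.exp (-K * p))
    have hfint : IntegrableOn
        (fun u : ℝ => Real.exp ((-K - a * u ^ 2 / 2 - u ^ 3 / 3) * p)) (Ioi (0:ℝ)) := by
      apply hMint.mono' ((Continuous.aestronglyMeasurable (by fun_prop)))
      filter_upwards [ae_restrict_mem measurableSet_Ioi] with u hu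
      rw [Real.norm_eq_abs, abs_of_pos (Real.exp_pos _)]
      exact hbound u (le_of_lt hu)
    calc (∫ u in Ioi (0 : ℝ), ‖Complex.exp (ThetaSigma σ (lamR1 σ u))‖ ^ p)
        = ∫ u in Ioi (0:ℝ), Real.exp ((-K - a * u ^ 2 / 2 - u ^ 3 / 3) * p) := by
          simp_rw [hfun]
      _ ≤ ∫ u in Ioi (0:ℝ),
            Real.exp (-K * p) * (Real.exp (1/3) * Real.exp (-(1/3) * u)) := by
          apply setIntegral_mono_on hfint hMint measurableSet_Ioi
          intro u hu; exact hbound u (le_of_lt hu)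
      _ = Real.exp (-K * p) * Real.exp (1/3) *
            ∫ u in Ioi (0:ℝ), Real.exp (-(1/3) * u) := by
          rw [← integral_const_mul]; congr 1; ext u; ring
      _ ≤ 3 * Real.exp (1/3) * Real.exp (-(4/3) * p * σ ^ ((3:ℝ)/2)) := by
          have hi : (∫ u in Ioi (0:ℝ), Real.exp (-(1/3) * u)) = 3 := by
            have := integral_comp_mul_left_Ioi (fun x : ℝ => Real.exp (-x)) 0
              (by norm_num : (0:ℝ) < 1/3)
            simp only [mul_zero, neg_mul] at this ⊢
            rw [this, integral_exp_neg_Ioi_zero]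
            norm_num
          rw [hi]
          have : Real.exp (-K * p) = Real.exp (-(4/3) * p * σ ^ ((3:ℝ)/2)) := by
            rw [hK]; ring_nf
          rw [this]; apply le_of_eq; ring
  · constructor
    · refine ⟨0, self_mem_Ici, ?_⟩
      simp only [hnorm 0]
      congr 1; rw [hK]; ring
    · rintro x ⟨u, hu, rfl⟩
      simp only [hnorm u]
      apply Real.exp_le_exp.mpr
      rw [hK]
      have h1 := mul_nonneg ha0 (sq_nonneg u)
      have h2 := pow_nonneg (Set.mem_Ici.mp hu) 3
      nlinarith
end
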